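/- In a cubelike graph on 2^d vertices with d ≥ 3, any set of pairwise strongly cospectral vertices has size at most 2^{⌈d/2⌉ − 1}. -/

import Mathlib

open Matrix

/-- `E` is the orthogonal projection onto the eigenspace of `A` for the eigenvalue `μ`. -/
def IsEigenProjection {V : Type*} [Fintype V] (A : Matrix V V ℝ) (μ : ℝ)
    (E : Matrix V V ℝ) : Prop :=
  E * E = E ∧ E.IsSymm ∧
    (∀ x : V → ℝ, A.mulVec (E.mulVec x) = μ • E.mulVec x) ∧
    (∀ y : V → ℝ, A.mulVec y = μ • y → E.mulVec y = y)

/-- Vertices `u` and `v` are strongly cospectral: `E e_u = ± E e_v` for every spectral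
idempotent `E` of `A`. -/
def StronglyCospectral {V : Type*} [Fintype V] [DecidableEq V]
    (A : Matrix V V ℝ) (u v : V) : Prop :=
  ∀ (μ : ℝ) (E : Matrix V V ℝ), IsEigenProjection A μ E →
    E.mulVec (Pi.single u 1) = E.mulVec (Pi.single v 1) ∨
    E.mulVec (Pi.single u 1) = -E.mulVec (Pi.single v 1)

/-- The adjacency matrix of the Cayley graph `X(G, C)` of an additive group:
`g ~ h` iff `h - g ∈ C`. -/
def addCayleyAdj {G : Type*} [AddGroup G] [Fintype G] [DecidableEq G] (C : Finset G) :
    Matrix G G ℝ :=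
  Matrix.of fun g h => if h - g ∈ C then 1 else 0

section Development
open Finset

abbrev Vd (d : ℕ) := Fin d → ZMod 2

def sgnZ (z : ZMod 2) : ℤ := if z = 0 then 1 else -1

lemma sgnZ_add (y z : ZMod 2) : sgnZ (y + z) = sgnZ y * sgnZ z := by revert y z; decide

lemma sgnZ_zero : sgnZ 0 = 1 := rfl

lemma zmod2_cases (z : ZMod 2) : z = 0 ∨ z = 1 := by revert z; decide

def dotv {d : ℕ} (a x : Vd d) : ZMod 2 := ∑ i, a i * x i

lemma dotv_comm {d : ℕ} (a x : Vd d) : dotv a x = dotv x a := by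
  unfold dotv; exact Finset.sum_congr rfl fun i _ => mul_comm _ _

lemma dotv_add_right {d : ℕ} (a x y : Vd d) : dotv a (x + y) = dotv a x + dotv a y := by
  unfold dotv
  rw [← Finset.sum_add_distrib]
  exact Finset.sum_congr rfl fun i _ => by simp [Pi.add_apply, mul_add]

lemma dotv_add_left {d : ℕ} (a b x : Vd d) : dotv (a + b) x = dotv a x + dotv b x := by
  rw [dotv_comm, dotv_add_right, dotv_comm x a, dotv_comm x b]

lemma dotv_single {d : ℕ} (a : Vd d) (i : Fin d) : dotv a (Pi.single i 1) = a i := by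
  simp [dotv, Pi.single_apply, mul_ite]

lemma add_self_vd {d : ℕ} (x : Vd d) : x + x = 0 := by
  funext i
  rw [Pi.add_apply, Pi.zero_apply]
  rcases zmod2_cases (x i) with h | h <;> rw [h] <;> decide

lemma add_eq_zero_iff_vd {d : ℕ} (x y : Vd d) : x + y = 0 ↔ x = y := by
  constructor
  · intro h
    have h2 : x + (y + y) = (x + y) + y := (add_assoc x y y).symm
    rw [add_self_vd y, h, add_zero, zero_add] at h2
    exact h2
  · intro h; rw [h, add_self_vd]

lemma sum_sgnZ_dotv {d : ℕ} (a : Vd d) :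
    ∑ x : Vd d, sgnZ (dotv a x) = if a = 0 then 2 ^ d else 0 := by
  split_ifs with h
  · subst h
    have : ∀ x : Vd d, sgnZ (dotv 0 x) = 1 := by
      intro x; unfold dotv; simp [sgnZ]
    rw [Finset.sum_congr rfl fun x _ => this x]
    simp [Fintype.card_fun]
  · -- a ≠ 0 : pick i with a i ≠ 0
    have hex : ∃ i, a i ≠ 0 := by
      by_contra hc
      push_neg at hc
      exact h (funext fun i => hc i)
    obtain ⟨i, hi⟩ := hex
    have hai : a i = 1 := ((zmod2_cases (a i)).resolve_left hi)
    have hneg : ∀ x : Vd d, sgnZ (dotv a (x + Pi.single i 1)) = - sgnZ (dotv a x) := by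
      intro x
      rw [dotv_add_right, sgnZ_add, dotv_single, hai]
      have h1 : sgnZ 1 = -1 := rfl
      rw [h1]; ring
    have e1 : ∑ x : Vd d, sgnZ (dotv a (x + Pi.single i 1)) = ∑ x : Vd d, sgnZ (dotv a x) :=
      Fintype.sum_equiv (Equiv.addRight (Pi.single i 1)) _ _ (fun x => rfl)
    have e2 : ∑ x : Vd d, sgnZ (dotv a (x + Pi.single i 1)) = - ∑ x : Vd d, sgnZ (dotv a x) := by
      rw [Finset.sum_congr rfl fun x _ => hneg x, Finset.sum_neg_distrib]
    omega

def lamZ {d : ℕ} (C : Finset (Vd d)) (a : Vd d) : ℤ := ∑ c ∈ C, sgnZ (dotv a c)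

lemma dotv_zero_left {d : ℕ} (c : Vd d) : dotv 0 c = 0 := by
  unfold dotv; simp

lemma lamZ_zero {d : ℕ} (C : Finset (Vd d)) : lamZ C 0 = C.card := by
  unfold lamZ
  rw [Finset.sum_congr rfl fun c _ => by rw [dotv_zero_left c]]
  simp [sgnZ]

lemma lamZ_parity {d : ℕ} (C : Finset (Vd d)) (a : Vd d) :
    (2 : ℤ) ∣ ((C.card : ℤ) - lamZ C a) := by
  unfold lamZ
  have hc : (C.card : ℤ) = ∑ _c ∈ C, (1:ℤ) := by simp
  rw [hc, ← Finset.sum_sub_distrib]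
  apply Finset.dvd_sum
  intro c _
  rcases zmod2_cases (dotv a c) with h | h <;> rw [h] <;> decide

lemma energy_total {d : ℕ} (C : Finset (Vd d)) :
    ∑ a : Vd d, (lamZ C a) ^ 2 = 2 ^ d * C.card := by
  have expand : ∀ a : Vd d, (lamZ C a) ^ 2 = ∑ c ∈ C, ∑ c' ∈ C, sgnZ (dotv a (c + c')) := by
    intro a
    rw [sq]
    unfold lamZ
    rw [Finset.sum_mul_sum]
    exact Finset.sum_congr rfl fun c _ => Finset.sum_congr rfl fun c' _ => by
      rw [dotv_add_right, sgnZ_add]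
  rw [Finset.sum_congr rfl fun a _ => expand a]
  rw [Finset.sum_comm]
  have inner : ∀ c ∈ C, ∑ a : Vd d, ∑ c' ∈ C, sgnZ (dotv a (c + c')) = 2 ^ d := by
    intro c hc
    rw [Finset.sum_comm]
    have h1 : ∀ c' : Vd d, ∑ a : Vd d, sgnZ (dotv a (c + c')) = if c' = c then 2 ^ d else 0 := by
      intro c'
      rw [Finset.sum_congr rfl fun a _ => by rw [dotv_comm]]
      rw [sum_sgnZ_dotv (c + c')]
      by_cases h : c' = c
      · subst h; simp [add_self_vd]
      · have hne : c + c' ≠ 0 := fun hh => h ((add_eq_zero_iff_vd c c').mp hh).symm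
        simp [hne, h]
    rw [Finset.sum_congr rfl fun c' _ => h1 c']
    rw [Finset.sum_ite_eq' C c (fun _ => (2:ℤ)^d)]
    simp [hc]
  rw [Finset.sum_congr rfl inner]
  rw [Finset.sum_const, nsmul_eq_mul]
  ring

noncomputable def sgnR (z : ZMod 2) : ℝ := ((sgnZ z : ℤ) : ℝ)

lemma sgnR_mul (y z : ZMod 2) : sgnR (y + z) = sgnR y * sgnR z := by
  unfold sgnR
  rw [sgnZ_add]
  push_cast
  ring

lemma sgnR_vals (z : ZMod 2) : sgnR z = 1 ∨ sgnR z = -1 := by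
  rcases zmod2_cases z with h | h <;> subst h <;> [left; right] <;> norm_num [sgnR, sgnZ]

lemma sgnR_inj {z z' : ZMod 2} (h : sgnR z = sgnR z') : z = z' := by
  rcases zmod2_cases z with h1 | h1 <;> rcases zmod2_cases z' with h2 | h2 <;>
    subst h1 <;> subst h2 <;> first
      | rfl
      | (exfalso; revert h; norm_num [sgnR, sgnZ])

lemma sgnR_neg_inj {z z' : ZMod 2} (h : sgnR z = -sgnR z') : z + z' = 1 := by
  rcases zmod2_cases z with h1 | h1 <;> rcases zmod2_cases z' with h2 | h2 <;>
    subst h1 <;> subst h2 <;> first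
      | rfl
      | (exfalso; revert h; norm_num [sgnR, sgnZ])

lemma sum_sgnR_dotv {d : ℕ} (a : Vd d) :
    ∑ x : Vd d, sgnR (dotv a x) = if a = 0 then (2:ℝ) ^ d else 0 := by
  have h := sum_sgnZ_dotv a
  have hc : ∑ x : Vd d, sgnR (dotv a x) = ((∑ x : Vd d, sgnZ (dotv a x) : ℤ) : ℝ) := by
    rw [Int.cast_sum]; rfl
  rw [hc, h]
  split_ifs <;> push_cast <;> ring

lemma chi_orth {d : ℕ} (b b' : Vd d) :
    ∑ x : Vd d, sgnR (dotv b x) * sgnR (dotv b' x) = if b = b' then (2:ℝ) ^ d else 0 := by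
  have h1 : ∀ x : Vd d, sgnR (dotv b x) * sgnR (dotv b' x) = sgnR (dotv (b + b') x) := by
    intro x
    rw [dotv_add_left, sgnR_mul]
  rw [Finset.sum_congr rfl fun x _ => h1 x, sum_sgnR_dotv]
  by_cases h : b = b'
  · subst h; simp [add_self_vd]
  · have hne : b + b' ≠ 0 := fun hh => h ((add_eq_zero_iff_vd _ _).mp hh)
    simp [hne, h]

section Proj

variable {d : ℕ} (C : Finset (Vd d))

def cls (v : ℤ) : Finset (Vd d) := Finset.univ.filter (fun b => lamZ C b = v)

noncomputable def EvM (v : ℤ) : Matrix (Vd d) (Vd d) ℝ :=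
  Matrix.of fun x y => ((2:ℝ) ^ d)⁻¹ * ∑ b ∈ cls C v, sgnR (dotv b x) * sgnR (dotv b y)

lemma EvM_apply (v : ℤ) (x y : Vd d) :
    EvM C v x y = ((2:ℝ) ^ d)⁻¹ * ∑ b ∈ cls C v, sgnR (dotv b x) * sgnR (dotv b y) := rfl

lemma npos : (0:ℝ) < 2 ^ d := by positivity

-- coefficient extraction: for b involved in the class, the "Fourier coefficient" of the
-- columns of EvM
lemma coefE (v : ℤ) (b : Vd d) (hb : b ∈ cls C v) (y : Vd d) :
    ∑ z : Vd d, sgnR (dotv b z) * EvM C v z y = sgnR (dotv b y) := by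
  have step1 : ∀ z : Vd d, sgnR (dotv b z) * EvM C v z y
      = ((2:ℝ) ^ d)⁻¹ * ∑ b' ∈ cls C v, sgnR (dotv b z) * sgnR (dotv b' z) * sgnR (dotv b' y) := by
    intro z
    rw [EvM_apply]
    simp only [Finset.mul_sum, Finset.sum_mul]
    exact Finset.sum_congr rfl fun b' _ => by ring
  rw [Finset.sum_congr rfl fun z _ => step1 z, ← Finset.mul_sum, Finset.sum_comm]
  have step2 : ∀ b' ∈ cls C v,
      ∑ z : Vd d, sgnR (dotv b z) * sgnR (dotv b' z) * sgnR (dotv b' y)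
      = (if b = b' then (2:ℝ)^d else 0) * sgnR (dotv b' y) := by
    intro b' _
    rw [← Finset.sum_mul, chi_orth]
  rw [Finset.sum_congr rfl step2]
  have step3 : ∑ b' ∈ cls C v, (if b = b' then (2:ℝ)^d else 0) * sgnR (dotv b' y)
      = (2:ℝ)^d * sgnR (dotv b y) := by
    simp only [ite_mul, zero_mul]
    rw [Finset.sum_ite_eq (cls C v) b (fun b' => (2:ℝ)^d * sgnR (dotv b' y))]
    simp [hb]
  rw [step3, inv_mul_cancel_left₀ (ne_of_gt (npos (d := d)))]

lemma EvM_mulVec (v : ℤ) (u : Vd d → ℝ) (x : Vd d) :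
    (EvM C v).mulVec u x
      = ((2:ℝ) ^ d)⁻¹ * ∑ b ∈ cls C v, sgnR (dotv b x) * (∑ z : Vd d, sgnR (dotv b z) * u z) := by
  unfold Matrix.mulVec dotProduct
  have step1 : ∀ y : Vd d, EvM C v x y * u y
      = ((2:ℝ) ^ d)⁻¹ * ∑ b ∈ cls C v, sgnR (dotv b x) * (sgnR (dotv b y) * u y) := by
    intro y
    rw [EvM_apply]
    simp only [Finset.mul_sum, Finset.sum_mul]
    exact Finset.sum_congr rfl fun b _ => by ring
  rw [Finset.sum_congr rfl fun y _ => step1 y, ← Finset.mul_sum, Finset.sum_comm]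
  congr 1
  exact Finset.sum_congr rfl fun b _ => by rw [Finset.mul_sum]

lemma EvM_idem (v : ℤ) : EvM C v * EvM C v = EvM C v := by
  ext x y
  rw [Matrix.mul_apply]
  have step1 : ∀ z : Vd d, EvM C v x z * EvM C v z y
      = ((2:ℝ) ^ d)⁻¹ * ∑ b ∈ cls C v, sgnR (dotv b x) * (sgnR (dotv b z) * EvM C v z y) := by
    intro z
    rw [EvM_apply]
    simp only [Finset.mul_sum, Finset.sum_mul]
    exact Finset.sum_congr rfl fun b _ => by ring
  rw [Finset.sum_congr rfl fun z _ => step1 z, ← Finset.mul_sum, Finset.sum_comm]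
  rw [EvM_apply]
  congr 1
  refine Finset.sum_congr rfl fun b hb => ?_
  rw [← Finset.mul_sum, coefE C v b hb y]

lemma EvM_symm (v : ℤ) : (EvM C v).IsSymm := by
  unfold Matrix.IsSymm
  ext x y
  rw [Matrix.transpose_apply, EvM_apply, EvM_apply]
  congr 1
  exact Finset.sum_congr rfl fun b _ => by ring

end Proj

lemma fourier_inversion {d : ℕ} (u : Vd d → ℝ) (x : Vd d) :
    ∑ b : Vd d, sgnR (dotv b x) * (∑ z : Vd d, sgnR (dotv b z) * u z)
      = (2:ℝ)^d * u x := by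
  have step1 : ∀ b : Vd d, sgnR (dotv b x) * (∑ z : Vd d, sgnR (dotv b z) * u z)
      = ∑ z : Vd d, u z * (sgnR (dotv x b) * sgnR (dotv z b)) := by
    intro b
    rw [Finset.mul_sum]
    exact Finset.sum_congr rfl fun z _ => by rw [dotv_comm b x, dotv_comm b z]; ring
  rw [Finset.sum_congr rfl fun b _ => step1 b, Finset.sum_comm]
  have step2 : ∀ z : Vd d, ∑ b : Vd d, u z * (sgnR (dotv x b) * sgnR (dotv z b))
      = u z * (if x = z then (2:ℝ)^d else 0) := by
    intro z
    rw [← Finset.mul_sum, chi_orth]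
  rw [Finset.sum_congr rfl fun z _ => step2 z]
  simp only [mul_ite, mul_zero]
  rw [Finset.sum_ite_eq Finset.univ x (fun z => u z * (2:ℝ)^d)]
  simp [mul_comm]

lemma zmod2_sub (a b : ZMod 2) : a - b = a + b := by revert a b; decide

lemma zmod2_add_self (a : ZMod 2) : a + a = 0 := by revert a; decide

lemma zmod2_ne_sum_one {a b : ZMod 2} (h : a ≠ b) : a + b = 1 := by
  revert a b; decide

lemma vd_sub {d : ℕ} (x y : Vd d) : x - y = x + y := by
  funext i; rw [Pi.sub_apply, Pi.add_apply, zmod2_sub]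

lemma addCayley_apply {d : ℕ} (C : Finset (Vd d)) (x y : Vd d) :
    addCayleyAdj C x y = if y + x ∈ C then (1:ℝ) else 0 := by
  unfold addCayleyAdj
  rw [Matrix.of_apply, vd_sub]

lemma addCayley_symm {d : ℕ} (C : Finset (Vd d)) : (addCayleyAdj C)ᵀ = addCayleyAdj C := by
  ext x y
  rw [Matrix.transpose_apply, addCayley_apply, addCayley_apply, add_comm]

noncomputable def chiV {d : ℕ} (b : Vd d) : Vd d → ℝ := fun x => sgnR (dotv b x)

lemma mulVec_apply'' {d : ℕ} (A : Matrix (Vd d) (Vd d) ℝ) (w : Vd d → ℝ) (x : Vd d) :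
    A.mulVec w x = ∑ y : Vd d, A x y * w y := rfl

lemma dotProduct_eq_sum {d : ℕ} (v w : Vd d → ℝ) : v ⬝ᵥ w = ∑ y : Vd d, v y * w y := rfl

lemma colEig {d : ℕ} (C : Finset (Vd d)) (b x : Vd d) :
    ∑ y : Vd d, addCayleyAdj C x y * sgnR (dotv b y)
      = (lamZ C b : ℝ) * sgnR (dotv b x) := by
  have step1 : ∀ y : Vd d, addCayleyAdj C x y * sgnR (dotv b y)
      = if y + x ∈ C then sgnR (dotv b y) else 0 := by
    intro y
    rw [addCayley_apply, ite_mul, one_mul, zero_mul]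
  rw [Finset.sum_congr rfl fun y _ => step1 y]
  rw [Finset.sum_ite, Finset.sum_const_zero, add_zero]
  have hset : Finset.univ.filter (fun y => y + x ∈ C)
      = C.map ⟨fun c => c + x, add_left_injective x⟩ := by
    ext y
    simp only [Finset.mem_filter, Finset.mem_univ, true_and, Finset.mem_map,
      Function.Embedding.coeFn_mk]
    constructor
    · intro hy
      exact ⟨y + x, hy, by rw [add_assoc, add_self_vd, add_zero]⟩
    · rintro ⟨c, hc, rfl⟩
      rwa [add_assoc, add_self_vd, add_zero]
  rw [hset, Finset.sum_map]
  simp only [Function.Embedding.coeFn_mk]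
  have step2 : ∀ c : Vd d, sgnR (dotv b (c + x)) = sgnR (dotv b c) * sgnR (dotv b x) := by
    intro c; rw [dotv_add_right, sgnR_mul]
  rw [Finset.sum_congr rfl fun c _ => step2 c, ← Finset.sum_mul]
  congr 1
  unfold lamZ sgnR
  rw [Int.cast_sum]

lemma Achi {d : ℕ} (C : Finset (Vd d)) (b : Vd d) :
    (addCayleyAdj C).mulVec (chiV b) = ((lamZ C b : ℝ)) • chiV b := by
  funext x
  rw [mulVec_apply'', Pi.smul_apply, smul_eq_mul]
  exact colEig C b x

lemma EvM_mulVec_eq {d : ℕ} (C : Finset (Vd d)) (v : ℤ) (u : Vd d → ℝ) :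
    (EvM C v).mulVec u = ((2:ℝ)^d)⁻¹ • ∑ b ∈ cls C v, (chiV b ⬝ᵥ u) • chiV b := by
  funext x
  rw [EvM_mulVec, Pi.smul_apply, smul_eq_mul, Finset.sum_apply]
  congr 1
  refine Finset.sum_congr rfl fun b _ => ?_
  rw [Pi.smul_apply, smul_eq_mul, dotProduct_eq_sum]
  show sgnR (dotv b x) * (∑ z : Vd d, sgnR (dotv b z) * u z)
      = (∑ z : Vd d, chiV b z * u z) * chiV b x
  unfold chiV
  ring

lemma EvM_eig {d : ℕ} (C : Finset (Vd d)) (v : ℤ) (u : Vd d → ℝ) :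
    (addCayleyAdj C).mulVec ((EvM C v).mulVec u) = (v:ℝ) • (EvM C v).mulVec u := by
  rw [EvM_mulVec_eq]
  set A := addCayleyAdj C
  have h1 : A.mulVec (((2:ℝ)^d)⁻¹ • ∑ b ∈ cls C v, (chiV b ⬝ᵥ u) • chiV b)
      = ((2:ℝ)^d)⁻¹ • ∑ b ∈ cls C v, (chiV b ⬝ᵥ u) • (A.mulVec (chiV b)) := by
    rw [← Matrix.mulVecLin_apply, _root_.map_smul, map_sum]
    congr 1
    refine Finset.sum_congr rfl fun b _ => ?_
    rw [_root_.map_smul, Matrix.mulVecLin_apply]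
  rw [h1]
  have h2 : ∀ b ∈ cls C v, (chiV b ⬝ᵥ u) • (A.mulVec (chiV b))
      = (v:ℝ) • ((chiV b ⬝ᵥ u) • chiV b) := by
    intro b hb
    have hbv : lamZ C b = v := by simpa [cls] using hb
    rw [Achi C b, hbv, smul_comm]
  rw [Finset.sum_congr rfl h2, ← Finset.smul_sum, smul_comm]

lemma dot_chi_mulVec {d : ℕ} (C : Finset (Vd d)) (b : Vd d) (u : Vd d → ℝ) :
    chiV b ⬝ᵥ ((addCayleyAdj C).mulVec u) = (lamZ C b : ℝ) * (chiV b ⬝ᵥ u) := by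
  rw [Matrix.dotProduct_mulVec]
  have : chiV b ᵥ* (addCayleyAdj C) = (addCayleyAdj C).mulVec (chiV b) := by
    conv_lhs => rw [← addCayley_symm C]
    rw [Matrix.vecMul_transpose]
  rw [this, Achi C b, smul_dotProduct, smul_eq_mul]

lemma coef_vanish {d : ℕ} (C : Finset (Vd d)) (v : ℤ) (u : Vd d → ℝ)
    (hu : (addCayleyAdj C).mulVec u = (v:ℝ) • u) (b : Vd d) (hb : lamZ C b ≠ v) :
    chiV b ⬝ᵥ u = 0 := by
  have key := dot_chi_mulVec C b u
  rw [hu, dotProduct_smul, smul_eq_mul] at key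
  have hne : ((lamZ C b : ℝ)) ≠ (v:ℝ) := fun hc => hb (by exact_mod_cast hc)
  by_contra hq
  exact hne (mul_right_cancel₀ hq key.symm)

lemma EvM_fix {d : ℕ} (C : Finset (Vd d)) (v : ℤ) (u : Vd d → ℝ)
    (hu : (addCayleyAdj C).mulVec u = (v:ℝ) • u) :
    (EvM C v).mulVec u = u := by
  funext x
  rw [EvM_mulVec]
  have split : ∑ b ∈ cls C v, sgnR (dotv b x) * (∑ z : Vd d, sgnR (dotv b z) * u z)
      = ∑ b : Vd d, sgnR (dotv b x) * (∑ z : Vd d, sgnR (dotv b z) * u z) := by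
    apply Finset.sum_subset (Finset.subset_univ _)
    · intro b _ hbnot
      have hb : lamZ C b ≠ v := by
        intro hc
        exact hbnot (by simp [cls, hc])
      have h0 : chiV b ⬝ᵥ u = 0 := coef_vanish C v u hu b hb
      rw [dotProduct_eq_sum] at h0
      unfold chiV at h0
      rw [h0, mul_zero]
  rw [split, fourier_inversion, inv_mul_cancel_left₀ (ne_of_gt (npos (d := d)))]

theorem EvM_isEigenProjection {d : ℕ} (C : Finset (Vd d)) (v : ℤ) :
    IsEigenProjection (addCayleyAdj C) ((v:ℤ):ℝ) (EvM C v) :=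
  ⟨EvM_idem C v, EvM_symm C v, EvM_eig C v, fun u hu => EvM_fix C v u hu⟩

lemma mulVec_single_col {d : ℕ} (M : Matrix (Vd d) (Vd d) ℝ) (u x : Vd d) :
    M.mulVec (Pi.single u 1) x = M x u := by
  rw [mulVec_apply'']
  have : ∀ y : Vd d, M x y * (Pi.single u 1 : Vd d → ℝ) y = if y = u then M x u else 0 := by
    intro y
    rcases eq_or_ne y u with h | h
    · subst h; simp
    · simp [Pi.single_eq_of_ne h, h]
  rw [Finset.sum_congr rfl fun y _ => this y, Finset.sum_ite_eq' Finset.univ u (fun _ => M x u)]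
  simp

lemma chi_col {d : ℕ} (C : Finset (Vd d)) (v : ℤ) (b : Vd d) (hb : b ∈ cls C v) (w : Vd d) :
    ∑ z : Vd d, sgnR (dotv b z) * EvM C v z w = sgnR (dotv b w) := coefE C v b hb w

lemma decode {d : ℕ} (C : Finset (Vd d)) (u v' : Vd d)
    (hsc : StronglyCospectral (addCayleyAdj C) u v') :
    ∀ a b : Vd d, lamZ C a = lamZ C b → dotv (a + b) (u + v') = 0 := by
  intro a b hab
  set μ := lamZ C a with hμ
  have ha : a ∈ cls C μ := by simp [cls, hμ]
  have hb : b ∈ cls C μ := by simp [cls, ← hab]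
  have hproj := EvM_isEigenProjection C μ
  have hdisj := hsc ((μ : ℤ) : ℝ) (EvM C μ) hproj
  have keyA : ∀ g ∈ cls C μ, ∀ x : Vd d, (EvM C μ).mulVec (Pi.single x 1) =
      (fun y => EvM C μ y x) := by
    intro g _ x
    funext y
    exact mulVec_single_col (EvM C μ) x y
  have colu : (EvM C μ).mulVec (Pi.single u 1) = fun y => EvM C μ y u := by
    funext y; exact mulVec_single_col _ u y
  have colv : (EvM C μ).mulVec (Pi.single v' 1) = fun y => EvM C μ y v' := by
    funext y; exact mulVec_single_col _ v' y
  have getsgn : ∀ g ∈ cls C μ, ∀ w : Vd d,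
      ∑ z : Vd d, sgnR (dotv g z) * (EvM C μ).mulVec (Pi.single w 1) z = sgnR (dotv g w) := by
    intro g hg w
    have : ∀ z : Vd d, (EvM C μ).mulVec (Pi.single w 1) z = EvM C μ z w := fun z =>
      mulVec_single_col _ w z
    rw [Finset.sum_congr rfl fun z _ => by rw [this z]]
    exact chi_col C μ g hg w
  rcases hdisj with heq | hneg
  · -- positive sign : dotv g u = dotv g v' for g ∈ cls
    have keyg : ∀ g ∈ cls C μ, dotv g (u + v') = 0 := by
      intro g hg
      have h1 : sgnR (dotv g u) = sgnR (dotv g v') := by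
        rw [← getsgn g hg u, ← getsgn g hg v', heq]
      have h2 : dotv g u = dotv g v' := sgnR_inj h1
      rw [dotv_add_right, h2, zmod2_add_self]
    have h3 := keyg a ha
    have h4 := keyg b hb
    rw [dotv_add_left, h3, h4, add_zero]
  · -- negative sign : dotv g u + dotv g v' = 1 for g ∈ cls
    have keyg : ∀ g ∈ cls C μ, dotv g (u + v') = 1 := by
      intro g hg
      have h1 : sgnR (dotv g u) = - sgnR (dotv g v') := by
        rw [← getsgn g hg u, ← getsgn g hg v', hneg]
        rw [← Finset.sum_neg_distrib]
        exact Finset.sum_congr rfl fun z _ => by rw [Pi.neg_apply]; ring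
      rw [dotv_add_right]
      exact sgnR_neg_inj h1
    have h3 := keyg a ha
    have h4 := keyg b hb
    rw [dotv_add_left, h3, h4]
    decide

def dotB (d : ℕ) : LinearMap.BilinForm (ZMod 2) (Vd d) :=
  LinearMap.mk₂ (ZMod 2) dotv
    (fun a b x => dotv_add_left a b x)
    (fun c a x => by
      unfold dotv
      simp only [Pi.smul_apply, smul_eq_mul, Finset.mul_sum]
      exact Finset.sum_congr rfl fun i _ => mul_assoc c (a i) (x i))
    (fun a x y => dotv_add_right a x y)
    (fun c a x => by
      unfold dotv
      simp only [Pi.smul_apply, smul_eq_mul, Finset.mul_sum]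
      exact Finset.sum_congr rfl fun i _ => by ring)

lemma dotB_apply {d : ℕ} (a x : Vd d) : dotB d a x = dotv a x := rfl

lemma dotB_nondeg (d : ℕ) : (dotB d).Nondegenerate := by
  refine ⟨fun a h => ?_, fun a h => ?_⟩ <;> funext i
  · have := h (Pi.single i 1)
    rw [dotB_apply, dotv_single] at this
    rw [this]; rfl
  · have := h (Pi.single i 1)
    rw [dotB_apply, dotv_comm, dotv_single] at this
    rw [this]; rfl

lemma dotB_refl (d : ℕ) : (dotB d).IsRefl := by
  intro a b h
  rw [dotB_apply, dotv_comm] at h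
  rw [dotB_apply]
  exact h

lemma finrank_Vd (d : ℕ) : Module.finrank (ZMod 2) (Vd d) = d := Module.finrank_fin_fun _

lemma card_submodule {d : ℕ} (W : Submodule (ZMod 2) (Vd d)) :
    Nat.card W = 2 ^ Module.finrank (ZMod 2) W := by
  letI : Fintype W := Fintype.ofFinite W
  have h := Module.card_eq_pow_finrank (K := ZMod 2) (V := W)
  rw [Nat.card_eq_fintype_card, h, ZMod.card 2]

lemma card_orthogonal {d : ℕ} (W : Submodule (ZMod 2) (Vd d)) :
    Nat.card ((dotB d).orthogonal W)
      = 2 ^ (d - Module.finrank (ZMod 2) W) := by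
  rw [card_submodule]
  congr 1
  rw [LinearMap.BilinForm.finrank_orthogonal (dotB_nondeg d) W, finrank_Vd]

lemma telescope (f : ℕ → ℤ) (hmono : ∀ j, f j ≤ f (j+1)) (hf0 : f 0 = 0)
    (G : ℤ) (hG : 0 ≤ G) :
    ∀ m : ℕ, ∑ j ∈ Finset.range m, (f (j+1) - f j) * (if f (j+1) ≤ G then 1 else 0)
      ≤ min (f m) G := by
  intro m
  induction m with
  | zero => simp [hf0, hG]
  | succ n ih =>
    rw [Finset.sum_range_succ]
    by_cases h : f (n+1) ≤ G
    · rw [if_pos h, mul_one]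
      have h1 : min (f n) G ≤ f n := min_le_left _ _
      have h2 : min (f (n+1)) G = f (n+1) := min_eq_left h
      rw [h2]
      linarith [ih]
    · rw [if_neg h, mul_zero, add_zero]
      calc ∑ j ∈ Finset.range n, (f (j+1) - f j) * (if f (j+1) ≤ G then 1 else 0)
          ≤ min (f n) G := ih
        _ ≤ min (f (n+1)) G := min_le_min (hmono n) le_rfl

lemma sum_closed (L : ℕ) (Mz N e : ℤ) :
    6 * ∑ j ∈ Finset.range L, (8*(j:ℤ)+4+4*e) * (N - Mz*(2*(j:ℤ)+1+e))
      = -16*Mz*(L:ℤ)*((L:ℤ)-1)*(2*(L:ℤ)-1)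
        + 3*(8*(N-Mz*(1+e))-2*Mz*(4+4*e))*(L:ℤ)*((L:ℤ)-1)
        + 6*(4+4*e)*(N-Mz*(1+e))*(L:ℤ) := by
  induction L with
  | zero => simp
  | succ n ih =>
    rw [Finset.sum_range_succ, mul_add, ih]
    push_cast
    ring

lemma exists_index (v : ℤ) (j e : ℕ) (he01 : e = 0 ∨ e = 1) (hdvd : (2:ℤ) ∣ v - e)
    (hlow : -(2*(j:ℤ)+2+e) < v) (hhigh : v < 2*(j:ℤ)+2+e) :
    ((v + 2*j + e)/2).toNat < 2*j+1+e ∧ 2 * ((((v + 2*j + e)/2).toNat : ℕ) : ℤ) - (2*(j:ℤ)+e) = v := by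
  omega

set_option maxHeartbeats 1000000 in
theorem rank_bound {d : ℕ} (hd : 3 ≤ d) (C : Finset (Vd d))
    (W : Submodule (ZMod 2) (Vd d))
    (hconf : ∀ a b : Vd d, lamZ C a = lamZ C b → ∀ w ∈ W, dotv (a + b) w = 0) :
    2 * Module.finrank (ZMod 2) W < d := by
  by_contra hcon
  push_neg at hcon
  set t := Module.finrank (ZMod 2) W with ht
  have htd : t ≤ d := by
    have h := Submodule.finrank_le W
    rwa [finrank_Vd] at h
  have ht2 : 2 ≤ t := by omega
  set M : ℕ := 2 ^ (d - t) with hM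
  set k : ℕ := 2 ^ (t - 1) with hk
  have hk2 : 2 ≤ k := by
    calc 2 = 2^1 := rfl
    _ ≤ 2^(t-1) := Nat.pow_le_pow_right (by norm_num) (by omega)
  have hM1 : 1 ≤ M := Nat.one_le_two_pow
  have hMk : M ≤ 2 * k := by
    rw [hM, hk]
    have : (2:ℕ) * 2^(t-1) = 2^t := by
      rw [← pow_succ']
      congr 1
      omega
    rw [this]
    exact Nat.pow_le_pow_right (by norm_num) (by omega)
  have hMkd : (M:ℤ) * (2 * k) = 2^d := by
    have : (M:ℕ) * (2 * k) = 2^d := by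
      rw [hM, hk]
      rw [show (2:ℕ) * 2^(t-1) = 2^t from by rw [← pow_succ']; congr 1; omega]
      rw [← pow_add]
      congr 1
      omega
    exact_mod_cast this
  -- the class size cap
  have cap : ∀ v : ℤ, ∀ a0 : Vd d, lamZ C a0 = v →
      (Finset.univ.filter (fun a => lamZ C a = v)).card ≤ M := by
    intro v a0 h0
    set F := Finset.univ.filter (fun a => lamZ C a = v) with hF
    have hmem : ∀ a : Vd d, a ∈ F → a + a0 ∈ (dotB d).orthogonal W := by
      intro a ha
      rw [LinearMap.BilinForm.mem_orthogonal_iff]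
      intro n hn
      have hal : lamZ C a = lamZ C a0 := by
        have : lamZ C a = v := by simpa [hF] using ha
        rw [this, h0]
      have := hconf a a0 hal n hn
      rw [dotB_apply, dotv_comm]
      exact this
    have hinj : Function.Injective (fun a : ↥F => (⟨a.1 + a0, hmem a.1 a.2⟩ :
        ((dotB d).orthogonal W))) := by
      intro a b hab
      have h1 : a.1 + a0 = b.1 + a0 := congrArg Subtype.val hab
      exact Subtype.ext (by
        have := congrArg (fun w => w + a0) h1
        simpa [add_assoc, add_self_vd] using this)
    have hcard : Nat.card ↥F ≤ Nat.card ((dotB d).orthogonal W) :=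
      Nat.card_le_card_of_injective _ hinj
    rw [card_orthogonal W] at hcard
    rw [Nat.card_eq_fintype_card, Fintype.card_coe] at hcard
    exact hcard
  -- parity setup
  set γ : ℤ := (C.card : ℤ) with hγ
  set e : ℕ := C.card % 2 with he
  have he01 : e = 0 ∨ e = 1 := Nat.mod_two_eq_zero_or_one _
  have hpar : ∀ a : Vd d, (2:ℤ) ∣ (lamZ C a - e) := by
    intro a
    have h1 := lamZ_parity C a
    have h2 : (e:ℤ) = γ % 2 := by
      rw [he, hγ]
      push_cast
      rfl
    omega
  set P : Finset (Vd d) := Finset.univ.erase 0 with hP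
  have hPcard : (P.card : ℤ) = 2^d - 1 := by
    rw [hP, Finset.card_erase_of_mem (Finset.mem_univ _), Finset.card_univ]
    have : Fintype.card (Vd d) = 2^d := by
      rw [Fintype.card_fun]
      congr 1 <;> simp [ZMod.card 2, Fintype.card_fin]
    rw [this]
    push_cast [Nat.one_le_two_pow]
    omega
  set N : ℤ := 2^d - 1 with hN
  -- energy identity on P
  have hEP : ∑ a ∈ P, (lamZ C a)^2 = 2^d * γ - γ^2 := by
    have htot := energy_total C
    have hsplit : ∑ x ∈ Finset.univ.erase 0, (lamZ C x)^2 + (lamZ C 0)^2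
        = ∑ a : Vd d, (lamZ C a)^2 := by
      simpa using Finset.sum_erase_add Finset.univ (fun a => (lamZ C a)^2)
        (Finset.mem_univ (0 : Vd d))
    rw [htot, lamZ_zero] at hsplit
    rw [hP, hγ]
    linarith [hsplit]
  -- the counting bound for each level
  have count : ∀ j : ℕ, N - (M:ℤ) * (2*(j:ℤ)+1+e)
      ≤ ((P.filter fun a => (2*(j:ℤ)+2+e)^2 ≤ (lamZ C a)^2).card : ℤ) := by
    intro j
    set x : ℤ := 2*(j:ℤ) + e with hx
    set Bj := P.filter (fun a => ¬ ((2*(j:ℤ)+2+e)^2 ≤ (lamZ C a)^2)) with hBj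
    have hsplit := Finset.card_filter_add_card_filter_not
      (s := P) (p := fun a => (2*(j:ℤ)+2+e)^2 ≤ (lamZ C a)^2)
    have hBcard : (Bj.card : ℤ) ≤ (M:ℤ) * (x + 1) := by
      set vals := Bj.image (lamZ C) with hvals
      have hsub : Bj ⊆ vals.biUnion (fun v => Finset.univ.filter (fun a => lamZ C a = v)) := by
        intro a ha
        rw [Finset.mem_biUnion]
        exact ⟨lamZ C a, Finset.mem_image_of_mem _ ha, by simp⟩
      have h1 : Bj.card ≤ ∑ v ∈ vals, (Finset.univ.filter (fun a => lamZ C a = v)).card :=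
        le_trans (Finset.card_le_card hsub) (Finset.card_biUnion_le)
      have h2 : ∑ v ∈ vals, (Finset.univ.filter (fun a => lamZ C a = v)).card
          ≤ vals.card * M := by
        rw [← smul_eq_mul, ← Finset.sum_const]
        apply Finset.sum_le_sum
        intro v hv
        obtain ⟨a0, _, h0⟩ := Finset.mem_image.mp hv
        exact cap v a0 h0
      have h3 : (vals.card : ℤ) ≤ x + 1 := by
        have hsub2 : vals ⊆ (Finset.range (2*j+1+e)).image
            (fun i : ℕ => 2*(i:ℤ) - (2*(j:ℤ)+e)) := by
          intro v hv
          obtain ⟨a, haB, hav⟩ := Finset.mem_image.mp hv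
          have hnot : ¬ ((2*(j:ℤ)+2+e)^2 ≤ (lamZ C a)^2) := by
            have := Finset.mem_filter.mp haB
            exact this.2
          have hdvd : (2:ℤ) ∣ (v - e) := hav ▸ hpar a
          push_neg at hnot
          rw [hav] at hnot
          have habs1 : v < 2*(j:ℤ)+2+e := by nlinarith [sq_nonneg (v - (2*(j:ℤ)+2+e))]
          have habs2 : -(2*(j:ℤ)+2+e) < v := by nlinarith [sq_nonneg (v + (2*(j:ℤ)+2+e))]
          obtain ⟨hi1, hi2⟩ := exists_index v j e he01 hdvd habs2 habs1
          rw [Finset.mem_image]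
          exact ⟨((v + 2*j + e)/2).toNat, Finset.mem_range.2 hi1, hi2⟩
        calc (vals.card : ℤ) ≤ (((Finset.range (2*j+1+e)).image
              (fun i : ℕ => 2*(i:ℤ) - (2*(j:ℤ)+e))).card : ℤ) := by
              exact_mod_cast Finset.card_le_card hsub2
          _ ≤ ((Finset.range (2*j+1+e)).card : ℤ) := by
              exact_mod_cast Finset.card_image_le
          _ = x + 1 := by rw [Finset.card_range]; push_cast; rw [hx]; ring
      calc (Bj.card : ℤ) ≤ (vals.card : ℤ) * M := by exact_mod_cast le_trans h1 h2
        _ ≤ (x+1) * M := mul_le_mul_of_nonneg_right h3 (by positivity)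
        _ = (M:ℤ) * (x+1) := by ring
    have hsplit2 : ((P.filter fun a => (2*(j:ℤ)+2+e)^2 ≤ (lamZ C a)^2).card : ℤ)
        + (Bj.card : ℤ) = (P.card : ℤ) := by
      rw [hBj]
      exact_mod_cast hsplit
    rw [hx] at hBcard
    linarith [hBcard, hsplit2, hPcard]
  -- pointwise telescoping bound
  set L : ℕ := k - e with hL
  have ptwise : ∀ a ∈ P, ∑ j ∈ Finset.range L,
      (8*(j:ℤ)+4+4*e) * (if (2*(j:ℤ)+2+e)^2 ≤ (lamZ C a)^2 then 1 else 0)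
        ≤ (lamZ C a)^2 - e := by
    intro a _
    set f : ℕ → ℤ := fun j => (2*(j:ℤ)+e)^2 - e with hf
    have hf0 : f 0 = 0 := by
      rw [hf]
      rcases he01 with h | h <;> rw [h] <;> norm_num
    have hmono : ∀ j, f j ≤ f (j+1) := by
      intro j
      rw [hf]
      have : (0:ℤ) ≤ (j:ℤ) := by positivity
      have : (0:ℤ) ≤ (e:ℤ) := by positivity
      push_cast
      nlinarith
    have hG : (0:ℤ) ≤ (lamZ C a)^2 - e := by
      rcases he01 with h | h
      · rw [h]; simpa using sq_nonneg (lamZ C a)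
      · rw [h]
        have hne : lamZ C a ≠ 0 := by
          intro hzero
          have := hpar a
          rw [hzero, h] at this
          omega
        have h1 : 1 ≤ |lamZ C a| := Int.one_le_abs hne
        have h2 : (lamZ C a)^2 = |lamZ C a|^2 := (sq_abs _).symm
        push_cast
        nlinarith
    have htel := telescope f hmono hf0 ((lamZ C a)^2 - e) hG L
    calc ∑ j ∈ Finset.range L,
        (8*(j:ℤ)+4+4*e) * (if (2*(j:ℤ)+2+e)^2 ≤ (lamZ C a)^2 then 1 else 0)
        = ∑ j ∈ Finset.range L, (f (j+1) - f j) * (if f (j+1) ≤ (lamZ C a)^2 - e then 1 else 0) := by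
          refine Finset.sum_congr rfl fun j _ => ?_
          have hw : f (j+1) - f j = 8*(j:ℤ)+4+4*e := by rw [hf]; push_cast; ring
          have hiff : ((2*(j:ℤ)+2+e)^2 ≤ (lamZ C a)^2) ↔ (f (j+1) ≤ (lamZ C a)^2 - e) := by
            rw [hf]
            constructor <;> intro hh <;> push_cast at hh ⊢ <;> nlinarith [hh]
          rw [hw, if_congr hiff rfl rfl]
      _ ≤ min (f L) ((lamZ C a)^2 - e) := htel
      _ ≤ (lamZ C a)^2 - e := min_le_right _ _
  -- sum the pointwise bound over P and swap sums
  have main : 2^d * γ - γ^2 - e * N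
      ≥ ∑ j ∈ Finset.range L, (8*(j:ℤ)+4+4*e) * (N - (M:ℤ)*(2*(j:ℤ)+1+e)) := by
    have hsum1 : ∑ a ∈ P, ((lamZ C a)^2 - (e:ℤ))
        ≥ ∑ a ∈ P, ∑ j ∈ Finset.range L,
          (8*(j:ℤ)+4+4*e) * (if (2*(j:ℤ)+2+e)^2 ≤ (lamZ C a)^2 then 1 else 0) :=
      Finset.sum_le_sum ptwise
    have hswap : ∑ a ∈ P, ∑ j ∈ Finset.range L,
          (8*(j:ℤ)+4+4*e) * (if (2*(j:ℤ)+2+e)^2 ≤ (lamZ C a)^2 then 1 else 0)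
        = ∑ j ∈ Finset.range L, (8*(j:ℤ)+4+4*e)
            * ((P.filter fun a => (2*(j:ℤ)+2+e)^2 ≤ (lamZ C a)^2).card : ℤ) := by
      rw [Finset.sum_comm]
      refine Finset.sum_congr rfl fun j _ => ?_
      rw [← Finset.mul_sum]
      congr 1
      rw [Finset.sum_boole]
    have hlower : ∑ j ∈ Finset.range L, (8*(j:ℤ)+4+4*e)
            * ((P.filter fun a => (2*(j:ℤ)+2+e)^2 ≤ (lamZ C a)^2).card : ℤ)
        ≥ ∑ j ∈ Finset.range L, (8*(j:ℤ)+4+4*e) * (N - (M:ℤ)*(2*(j:ℤ)+1+e)) := by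
      apply Finset.sum_le_sum
      intro j _
      apply mul_le_mul_of_nonneg_left (count j)
      positivity
    have hleft : ∑ a ∈ P, ((lamZ C a)^2 - (e:ℤ)) = 2^d * γ - γ^2 - e * N := by
      rw [Finset.sum_sub_distrib, hEP, Finset.sum_const, nsmul_eq_mul, hPcard]
      ring
    rw [hleft] at hsum1
    linarith [hsum1, hswap ▸ hsum1, hlower]
  -- final numeric contradiction
  have hAMGM : 2^d * γ - γ^2 ≤ ((M:ℤ) * k)^2 := by
    have h1 : ((M:ℤ) * k) * 2 = 2^d := by linarith [hMkd]
    nlinarith [sq_nonneg (γ - (M:ℤ)*k)]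
  have hclosed := sum_closed L (M:ℤ) N (e:ℤ)
  have hNval : N = 2 * (M:ℤ) * k - 1 := by
    have h2 : N = 2^d - 1 := hN
    linarith [hMkd, h2]
  have hfin : 6 * ((e:ℤ) * N) + 6 * (∑ j ∈ Finset.range L,
      (8*(j:ℤ)+4+4*e) * (N - (M:ℤ)*(2*(j:ℤ)+1+e))) > 6 * ((M:ℤ)*k)^2 := by
    rw [hclosed]
    have hkZ : (2:ℤ) ≤ (k:ℤ) := by exact_mod_cast hk2
    have hMZ : (1:ℤ) ≤ (M:ℤ) := by exact_mod_cast hM1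
    have hMkZ : (M:ℤ) ≤ 2 * k := by exact_mod_cast hMk
    rcases he01 with h | h
    · rw [h] at hL ⊢
      have hLk : (L:ℤ) = (k:ℤ) := by rw [hL]; simp
      rw [hLk, hNval]
      push_cast
      nlinarith [mul_nonneg (mul_nonneg (sub_nonneg.2 hMkZ) (by positivity : (0:ℤ) ≤ (k:ℤ)))
          (by positivity : (0:ℤ) ≤ (k:ℤ)),
        mul_pos (by positivity : (0:ℤ) < (M:ℤ)) (by positivity : (0:ℤ) < (k:ℤ)),
        sq_nonneg ((k:ℤ)-2),
        mul_nonneg (by positivity : (0:ℤ) ≤ (M:ℤ)) (sq_nonneg ((k:ℤ)-2))]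
    · rw [h] at hL ⊢
      have hLk : (L:ℤ) = (k:ℤ) - 1 := by
        rw [hL, Nat.cast_sub (by omega : 1 ≤ k)]
        simp
      rw [hLk, hNval]
      push_cast
      nlinarith [mul_nonneg (mul_nonneg (sub_nonneg.2 hMkZ) (by positivity : (0:ℤ) ≤ (k:ℤ)))
          (by positivity : (0:ℤ) ≤ (k:ℤ)),
        mul_pos (by positivity : (0:ℤ) < (M:ℤ)) (by positivity : (0:ℤ) < (k:ℤ)),
        sq_nonneg ((k:ℤ)-2),
        mul_nonneg (by positivity : (0:ℤ) ≤ (M:ℤ)) (sq_nonneg ((k:ℤ)-2))]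
  have hcontr : 6 * (2^d * γ - γ^2) ≥ 6 * ((e:ℤ) * N) + 6 * (∑ j ∈ Finset.range L,
      (8*(j:ℤ)+4+4*e) * (N - (M:ℤ)*(2*(j:ℤ)+1+e))) := by linarith [main]
  linarith [hAMGM, hfin, hcontr]

lemma dotv_zero_right {d : ℕ} (a : Vd d) : dotv a 0 = 0 := by
  unfold dotv; simp

lemma dotv_smul_right {d : ℕ} (a : Vd d) (c : ZMod 2) (w : Vd d) :
    dotv a (c • w) = c * dotv a w := by
  unfold dotv
  rw [Finset.mul_sum]
  exact Finset.sum_congr rfl fun i _ => by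
    rw [Pi.smul_apply, smul_eq_mul]
    ring

theorem stmt15' (d : ℕ) (hd : 3 ≤ d) (C : Finset (Fin d → ZMod 2)) (h0 : 0 ∉ C)
    (S : Finset (Fin d → ZMod 2))
    (hS : ∀ u ∈ S, ∀ v ∈ S, StronglyCospectral (addCayleyAdj C) u v) :
    S.card ≤ 2 ^ ((d + 1) / 2 - 1) := by
  rcases S.eq_empty_or_nonempty with hS0 | ⟨u0, hu0⟩
  · simp [hS0]
  · set W := Submodule.span (ZMod 2) {w : Vd d | ∃ u ∈ S, ∃ v ∈ S, w = u + v} with hW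
    have hgen : ∀ u ∈ S, ∀ v ∈ S, u + v ∈ W := fun u hu v hv =>
      Submodule.subset_span ⟨u, hu, v, hv, rfl⟩
    have hconf : ∀ a b : Vd d, lamZ C a = lamZ C b → ∀ w ∈ W, dotv (a + b) w = 0 := by
      intro a b hab w hw
      induction hw using Submodule.span_induction with
      | mem x hx =>
        obtain ⟨u, hu, v, hv, rfl⟩ := hx
        exact decode C u v (hS u hu v hv) a b hab
      | zero => exact dotv_zero_right _
      | add x y hx hy ihx ihy => rw [dotv_add_right, ihx, ihy, add_zero]
      | smul c x hx ihx => rw [dotv_smul_right, ihx, mul_zero]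
    have hrank := rank_bound hd C W hconf
    set t := Module.finrank (ZMod 2) W with ht
    -- injection of S into W
    have hinj : Function.Injective (fun u : ↥S => (⟨u.1 + u0, hgen u.1 u.2 u0 hu0⟩ : ↥W)) := by
      intro a b hab
      have h1 : a.1 + u0 = b.1 + u0 := congrArg Subtype.val hab
      exact Subtype.ext (by
        have := congrArg (fun w => w + u0) h1
        simpa [add_assoc, add_self_vd] using this)
    have hcard : S.card ≤ 2 ^ t := by
      have h1 : Nat.card ↥S ≤ Nat.card ↥W := Nat.card_le_card_of_injective _ hinj
      rw [Nat.card_eq_fintype_card, Fintype.card_coe, card_submodule W] at h1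
      exact h1
    calc S.card ≤ 2 ^ t := hcard
      _ ≤ 2 ^ ((d + 1) / 2 - 1) := Nat.pow_le_pow_right (by norm_num) (by omega)


end Development

theorem stmt15 (d : ℕ) (hd : 3 ≤ d) (C : Finset (Fin d → ZMod 2)) (h0 : 0 ∉ C)
    (S : Finset (Fin d → ZMod 2))
    (hS : ∀ u ∈ S, ∀ v ∈ S, StronglyCospectral (addCayleyAdj C) u v) :
    S.card ≤ 2 ^ ((d + 1) / 2 - 1) := by
  exact stmt15' d hd C h0 S hS
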